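/- arXiv:2509.21912 — 11 statements merged into one kernel-verified Lean document; each statement's English description precedes it below -/
import Mathlib

section
/- (Posterior-based guidance, joint form.) Under the common-conditional-path setup, for every x ∈ Ω with p_t(x) > 0 and q_t(x) > 0 and every z ∈ Ω, the target posterior is the density-ratio reweighting of the source posterior: q_{1|t}(z|x) = r(z) · p_{1|t}(z|x) / (Σ_{x₁∈Ω} r(x₁) p_{1|t}(x₁|x)). -/
open Finset

/-- Posterior-based guidance, joint form: for every `x` with `p_t x > 0` and `q_t x > 0`
and every `z`, `q_{1|t}(z|x) = r z · p_{1|t}(z|x) / (Σ_{x₁} r x₁ p_{1|t}(x₁|x))`. -/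
theorem posterior_based_guidance_joint
    {S : Type*} [Fintype S] [Nonempty S] {D : ℕ} (hD : 0 < D)
    (p₁ q₁ : (Fin D → S) → ℝ)
    (hp₁nonneg : ∀ x, 0 ≤ p₁ x) (hp₁sum : ∑ x, p₁ x = 1)
    (hq₁nonneg : ∀ x, 0 ≤ q₁ x) (hq₁sum : ∑ x, q₁ x = 1)
    (hac : ∀ x, 0 < q₁ x → 0 < p₁ x)
    (r : (Fin D → S) → ℝ)
    (hr : ∀ x, r x = if 0 < p₁ x then q₁ x / p₁ x else 0)
    (k : (Fin D → S) → (Fin D → S) → ℝ)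
    (hknonneg : ∀ x x₁, 0 ≤ k x x₁) (hksum : ∀ x₁, ∑ x, k x x₁ = 1)
    (pt qt : (Fin D → S) → ℝ)
    (hpt : ∀ x, pt x = ∑ x₁, k x x₁ * p₁ x₁)
    (hqt : ∀ x, qt x = ∑ x₁, k x x₁ * q₁ x₁)
    (p1t q1t : (Fin D → S) → (Fin D → S) → ℝ)
    (hp1t : ∀ x₁ x, 0 < pt x → p1t x₁ x = k x x₁ * p₁ x₁ / pt x)
    (hq1t : ∀ x₁ x, 0 < qt x → q1t x₁ x = k x x₁ * q₁ x₁ / qt x)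
    (x : Fin D → S) (hptpos : 0 < pt x) (hqtpos : 0 < qt x)
    (z : Fin D → S) :
    q1t z x = r z * p1t z x / (∑ x₁, r x₁ * p1t x₁ x) := by
  have key : ∀ x₁, r x₁ * (k x x₁ * p₁ x₁) = k x x₁ * q₁ x₁ := by
    intro x₁
    rw [hr]
    by_cases h : 0 < p₁ x₁
    · simp only [h, if_true]
      field_simp
    · have hq : q₁ x₁ = 0 := by
        by_contra hq
        exact h (hac x₁ (lt_of_le_of_ne (hq₁nonneg x₁) (Ne.symm hq)))
      simp [h, hq]
  have hsum : (∑ x₁, r x₁ * p1t x₁ x) = qt x / pt x := by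
    rw [eq_div_iff (ne_of_gt hptpos), Finset.sum_mul]
    rw [hqt]
    apply Finset.sum_congr rfl
    intro x₁ _
    rw [hp1t _ _ hptpos, mul_assoc, div_mul_cancel₀ _ (ne_of_gt hptpos), key]
  rw [hsum, hq1t _ _ hqtpos, hp1t _ _ hptpos, ← mul_div_assoc, key]
  field_simp
end

section
/- (Theorem 1, posterior-based guidance, coordinate form.) Under the common-conditional-path setup, for every x ∈ Ω with p_t(x) > 0 and q_t(x) > 0, every coordinate d ∈ Fin D and every symbol s ∈ S, the coordinate-marginal target posterior satisfies q^d_{1|t}(s|x) · (Σ_{x₁∈Ω} r(x₁) p_{1|t}(x₁|x)) = Σ_{x₁ : x₁(d) = s} r(x₁) p_{1|t}(x₁|x); equivalently, q^d_{1|t}(s|x) equals the conditional expectation of r(x₁) given x₁(d) = s and x_t = x, divided by the conditional expectation of r(x₁) given x_t = x, times p^d_{1|t}(s|x). -/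
open Finset

/-- Theorem 1 (posterior-based guidance, coordinate form): for every `x` with
`p_t x > 0` and `q_t x > 0`, every coordinate `d` and symbol `s`,
`q^d_{1|t}(s|x) · (Σ_{x₁} r x₁ p_{1|t}(x₁|x)) = Σ_{x₁ : x₁ d = s} r x₁ p_{1|t}(x₁|x)`. -/
theorem posterior_based_guidance_coordinate
    {S : Type*} [Fintype S] [Nonempty S] [DecidableEq S] {D : ℕ} (hD : 0 < D)
    (p₁ q₁ : (Fin D → S) → ℝ)
    (hp₁nonneg : ∀ x, 0 ≤ p₁ x) (hp₁sum : ∑ x, p₁ x = 1)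
    (hq₁nonneg : ∀ x, 0 ≤ q₁ x) (hq₁sum : ∑ x, q₁ x = 1)
    (hac : ∀ x, 0 < q₁ x → 0 < p₁ x)
    (r : (Fin D → S) → ℝ)
    (hr : ∀ x, r x = if 0 < p₁ x then q₁ x / p₁ x else 0)
    (k : (Fin D → S) → (Fin D → S) → ℝ)
    (hknonneg : ∀ x x₁, 0 ≤ k x x₁) (hksum : ∀ x₁, ∑ x, k x x₁ = 1)
    (pt qt : (Fin D → S) → ℝ)
    (hpt : ∀ x, pt x = ∑ x₁, k x x₁ * p₁ x₁)
    (hqt : ∀ x, qt x = ∑ x₁, k x x₁ * q₁ x₁)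
    (p1t q1t : (Fin D → S) → (Fin D → S) → ℝ)
    (hp1t : ∀ x₁ x, 0 < pt x → p1t x₁ x = k x x₁ * p₁ x₁ / pt x)
    (hq1t : ∀ x₁ x, 0 < qt x → q1t x₁ x = k x x₁ * q₁ x₁ / qt x)
    (pd qd : Fin D → S → (Fin D → S) → ℝ)
    (hpd : ∀ d s x, pd d s x = ∑ x₁ ∈ Finset.univ.filter (fun x₁ => x₁ d = s), p1t x₁ x)
    (hqd : ∀ d s x, qd d s x = ∑ x₁ ∈ Finset.univ.filter (fun x₁ => x₁ d = s), q1t x₁ x)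
    (x : Fin D → S) (hptpos : 0 < pt x) (hqtpos : 0 < qt x)
    (d : Fin D) (s : S) :
    qd d s x * (∑ x₁, r x₁ * p1t x₁ x) =
      ∑ x₁ ∈ Finset.univ.filter (fun x₁ => x₁ d = s), r x₁ * p1t x₁ x := by
  have key : ∀ x₁, r x₁ * p1t x₁ x = k x x₁ * q₁ x₁ / pt x := by
    intro x₁
    rw [hr, hp1t _ _ hptpos]
    by_cases h : 0 < p₁ x₁
    · rw [if_pos h]
      field_simp
    · rw [if_neg h, zero_mul]
      have hp0 : p₁ x₁ = 0 := le_antisymm (not_lt.mp h) (hp₁nonneg x₁)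
      have hq0 : q₁ x₁ = 0 := by
        by_contra hq
        have := hac x₁ (lt_of_le_of_ne (hq₁nonneg x₁) (Ne.symm hq))
        exact h this
      rw [hq0, mul_zero, zero_div]
  have hsum : (∑ x₁, r x₁ * p1t x₁ x) = qt x / pt x := by
    simp only [key]
    rw [← Finset.sum_div, ← hqt]
  have hfsum : (∑ x₁ ∈ Finset.univ.filter (fun x₁ => x₁ d = s), r x₁ * p1t x₁ x)
      = (∑ x₁ ∈ Finset.univ.filter (fun x₁ => x₁ d = s), k x x₁ * q₁ x₁) / pt x := by
    simp only [key]
    rw [← Finset.sum_div]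
  have hqdval : qd d s x = (∑ x₁ ∈ Finset.univ.filter (fun x₁ => x₁ d = s), k x x₁ * q₁ x₁) / qt x := by
    rw [hqd]
    rw [Finset.sum_congr rfl (fun x₁ _ => hq1t x₁ x hqtpos), ← Finset.sum_div]
  rw [hsum, hfsum, hqdval]
  field_simp
end

section
/- (Coordinatewise marginalization of a factorized conditional rate.) Suppose the conditional transition rate factorizes as u(z, x | x₁) = Σ_{d∈Fin D} [x^{∖d} = z^{∖d}] · u^d(z(d), x(d) | x₁(d)), where [x^{∖d} = z^{∖d}] is 1 if x and z agree on all coordinates other than d and 0 otherwise, and u^d : S × S × S → ℝ. Then for every x with q_t(x) > 0 and every z, the marginal rate satisfies Σ_{x₁∈Ω} u(z, x | x₁) q_{1|t}(x₁|x) = Σ_{d∈Fin D} [x^{∖d} = z^{∖d}] · Σ_{s∈S} u^d(z(d), x(d) | s) q^d_{1|t}(s|x); i.e. the marginal rate depends on x₁ only through the coordinate-marginal posteriors. -/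
open Finset

/-- Coordinatewise marginalization of a factorized conditional rate: if
`u(z,x|x₁) = Σ_d [x^{∖d} = z^{∖d}] u^d(z d, x d | x₁ d)`, then the posterior-averaged
rate depends on `x₁` only through the coordinate-marginal posteriors. -/
theorem coordinatewise_marginalization_of_factorized_rate
    {S : Type*} [Fintype S] [Nonempty S] [DecidableEq S] {D : ℕ} (hD : 0 < D)
    (q₁ : (Fin D → S) → ℝ)
    (hq₁nonneg : ∀ x, 0 ≤ q₁ x) (hq₁sum : ∑ x, q₁ x = 1)
    (k : (Fin D → S) → (Fin D → S) → ℝ)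
    (hknonneg : ∀ x x₁, 0 ≤ k x x₁) (hksum : ∀ x₁, ∑ x, k x x₁ = 1)
    (qt : (Fin D → S) → ℝ)
    (hqt : ∀ x, qt x = ∑ x₁, k x x₁ * q₁ x₁)
    (q1t : (Fin D → S) → (Fin D → S) → ℝ)
    (hq1t : ∀ x₁ x, 0 < qt x → q1t x₁ x = k x x₁ * q₁ x₁ / qt x)
    (qd : Fin D → S → (Fin D → S) → ℝ)
    (hqd : ∀ d s x, qd d s x = ∑ x₁ ∈ Finset.univ.filter (fun x₁ => x₁ d = s), q1t x₁ x)
    (ud : Fin D → S → S → S → ℝ)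
    (u : (Fin D → S) → (Fin D → S) → (Fin D → S) → ℝ)
    (hu : ∀ z x x₁, u z x x₁ =
      ∑ d, (if ∀ e, e ≠ d → x e = z e then (1 : ℝ) else 0) * ud d (z d) (x d) (x₁ d))
    (x : Fin D → S) (hqtpos : 0 < qt x) (z : Fin D → S) :
    ∑ x₁, u z x x₁ * q1t x₁ x =
      ∑ d, (if ∀ e, e ≠ d → x e = z e then (1 : ℝ) else 0) *
        ∑ s, ud d (z d) (x d) s * qd d s x := by
  simp only [hu, Finset.sum_mul]
  rw [Finset.sum_comm]
  refine Finset.sum_congr rfl fun d _ => ?_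
  rw [mul_sum]
  simp only [hqd]
  rw [← Finset.sum_fiberwise (g := fun x₁ : Fin D → S => x₁ d)
    (f := fun x₁ => (if ∀ e, e ≠ d → x e = z e then (1:ℝ) else 0) * ud d (z d) (x d) (x₁ d) * q1t x₁ x)]
  refine Finset.sum_congr rfl fun s _ => ?_
  rw [mul_sum, mul_sum]
  refine Finset.sum_congr rfl fun x₁ hx₁ => ?_
  rw [Finset.mem_filter] at hx₁
  rw [hx₁.2]
  ring
end

section
/- (Theorem 2, rate-based guidance, limit form.) Let Ω be a nonempty finite set and fix two distinct states z ≠ x. Let p_t, q_t be pmfs on Ω with p_t(x), p_t(z), q_t(x), q_t(z) > 0, and for each h in an interval (0, h₀) let p_{t+h}, q_{t+h} be pmfs and P_h, Q_h forward transition kernels with p_{t+h}(w) = Σ_v P_h(w|v) p_t(v) and q_{t+h}(w) = Σ_v Q_h(w|v) q_t(v) for all w. Assume: (i) equal backward conditionals: P_h(w|v) p_t(v)/p_{t+h}(w) = Q_h(w|v) q_t(v)/q_{t+h}(w) whenever p_{t+h}(w) > 0 and q_{t+h}(w) > 0; (ii) continuity: p_{t+h}(w) → p_t(w) and q_{t+h}(w)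 → q_t(w) as h → 0⁺, for w ∈ {x, z}; (iii) the limit u^p(z, x) := lim_{h→0⁺} P_h(z|x)/h exists. Then lim_{h→0⁺} Q_h(z|x)/h exists and equals (q_t(z) p_t(x) / (p_t(z) q_t(x))) · u^p(z, x). -/
open Finset Filter Topology

/-- Theorem 2 (rate-based guidance, limit form): under equal backward conditionals and
continuity of the marginals, if `P_h(z|x)/h → u^p(z,x)` as `h → 0⁺`, then
`Q_h(z|x)/h → (q_t(z) p_t(x) / (p_t(z) q_t(x))) · u^p(z,x)`. -/
theorem rate_based_guidance_limit
    {Ω : Type*} [Fintype Ω] [Nonempty Ω]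
    (x z : Ω) (hzx : z ≠ x)
    (pt qt : Ω → ℝ)
    (hptnonneg : ∀ w, 0 ≤ pt w) (hptsum : ∑ w, pt w = 1)
    (hqtnonneg : ∀ w, 0 ≤ qt w) (hqtsum : ∑ w, qt w = 1)
    (hptx : 0 < pt x) (hptz : 0 < pt z) (hqtx : 0 < qt x) (hqtz : 0 < qt z)
    (h₀ : ℝ) (hh₀ : 0 < h₀)
    (pth qth : ℝ → Ω → ℝ) (Ph Qh : ℝ → Ω → Ω → ℝ)
    (hpthpmf : ∀ h ∈ Set.Ioo (0 : ℝ) h₀, (∀ w, 0 ≤ pth h w) ∧ ∑ w, pth h w = 1)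
    (hqthpmf : ∀ h ∈ Set.Ioo (0 : ℝ) h₀, (∀ w, 0 ≤ qth h w) ∧ ∑ w, qth h w = 1)
    (hPker : ∀ h ∈ Set.Ioo (0 : ℝ) h₀, (∀ w v, 0 ≤ Ph h w v) ∧ ∀ v, ∑ w, Ph h w v = 1)
    (hQker : ∀ h ∈ Set.Ioo (0 : ℝ) h₀, (∀ w v, 0 ≤ Qh h w v) ∧ ∀ v, ∑ w, Qh h w v = 1)
    (hpmarg : ∀ h ∈ Set.Ioo (0 : ℝ) h₀, ∀ w, pth h w = ∑ v, Ph h w v * pt v)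
    (hqmarg : ∀ h ∈ Set.Ioo (0 : ℝ) h₀, ∀ w, qth h w = ∑ v, Qh h w v * qt v)
    (hback : ∀ h ∈ Set.Ioo (0 : ℝ) h₀, ∀ v w, 0 < pth h w → 0 < qth h w →
      Ph h w v * pt v / pth h w = Qh h w v * qt v / qth h w)
    (hpcont : ∀ w ∈ ({x, z} : Set Ω),
      Tendsto (fun h => pth h w) (𝓝[>] (0 : ℝ)) (𝓝 (pt w)))
    (hqcont : ∀ w ∈ ({x, z} : Set Ω),
      Tendsto (fun h => qth h w) (𝓝[>] (0 : ℝ)) (𝓝 (qt w)))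
    (up : ℝ)
    (hlim : Tendsto (fun h => Ph h z x / h) (𝓝[>] (0 : ℝ)) (𝓝 up)) :
    Tendsto (fun h => Qh h z x / h) (𝓝[>] (0 : ℝ))
      (𝓝 (qt z * pt x / (pt z * qt x) * up)) := by
  have hzmem : z ∈ ({x, z} : Set Ω) := by simp
  have hpz := hpcont z hzmem
  have hqz := hqcont z hzmem
  -- eventual facts
  have hmem : ∀ᶠ h in 𝓝[>] (0:ℝ), h ∈ Set.Ioo (0:ℝ) h₀ := by
    filter_upwards [self_mem_nhdsWithin,
      eventually_nhdsWithin_of_eventually_nhds (eventually_lt_nhds hh₀)] with h h1 h2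
    exact ⟨h1, h2⟩
  have hpz_pos : ∀ᶠ h in 𝓝[>] (0:ℝ), 0 < pth h z := hpz.eventually (eventually_gt_nhds hptz)
  have hqz_pos : ∀ᶠ h in 𝓝[>] (0:ℝ), 0 < qth h z := hqz.eventually (eventually_gt_nhds hqtz)
  have key : Tendsto (fun h => (Ph h z x / h) * (pt x * qth h z / (qt x * pth h z)))
      (𝓝[>] (0:ℝ)) (𝓝 (up * (pt x * qt z / (qt x * pt z)))) := by
    refine hlim.mul ?_
    exact ((tendsto_const_nhds.mul hqz).div (tendsto_const_nhds.mul hpz)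
      (by positivity))
  have heq : qt z * pt x / (pt z * qt x) * up = up * (pt x * qt z / (qt x * pt z)) := by ring
  rw [heq]
  refine Tendsto.congr' ?_ key
  filter_upwards [hmem, hpz_pos, hqz_pos, self_mem_nhdsWithin] with h hm hp hq h0
  have hb := hback h hm x z hp hq
  have hQ : Qh h z x = Ph h z x * pt x * qth h z / (pth h z * qt x) := by
    field_simp at hb ⊢
    linarith [hb]
  rw [hQ]
  have h0' : (h:ℝ) ≠ 0 := ne_of_gt h0
  field_simp
end

section
/- (Marginalization proposition: the posterior-averaged conditional rate generates the marginal path.) Let Ω and A be nonempty finite sets, let p₁ be a pmf on A, and for each x₁ ∈ A let t ↦ p_{t|1}(·|x₁) be a family of pmfs on Ω, differentiable in t at a point t₀, satisfying the conditional Kolmogorov forward equation d/dt p_{t|1}(x|x₁) = Σ_{z∈Ω} u_t(x, z | x₁) p_{t|1}(z|x₁) at t₀, where u_{t₀}(·, · | x₁) : Ω × Ω → ℝ. Define the marginal p_t(x) = Σ_{x₁∈A} p₁(x₁) p_{t|1}(x|x₁), assume p_{t₀}(z) > 0 for all z ∈ Ω, define the posterior p_{1|t₀}(x₁|z) = p₁(x₁)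 p_{t₀|1}(z|x₁)/p_{t₀}(z) and the marginal rate u_{t₀}(x, z) = Σ_{x₁∈A} u_{t₀}(x, z | x₁) p_{1|t₀}(x₁|z). Then the marginal path satisfies the Kolmogorov forward equation at t₀: d/dt p_t(x)|_{t=t₀} = Σ_{z∈Ω} u_{t₀}(x, z) p_{t₀}(z), for every x ∈ Ω. -/
open Finset

/-- Marginalization proposition: the posterior-averaged conditional rate generates the
marginal probability path (Kolmogorov forward equation for the marginal path). -/
theorem marginal_rate_generates_marginal_path
    {Ω : Type*} [Fintype Ω] [Nonempty Ω]
    {A : Type*} [Fintype A] [Nonempty A]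
    (p₁ : A → ℝ) (hp₁nonneg : ∀ x₁, 0 ≤ p₁ x₁) (hp₁sum : ∑ x₁, p₁ x₁ = 1)
    (pt1 : ℝ → A → Ω → ℝ)
    (hpt1nonneg : ∀ t x₁ x, 0 ≤ pt1 t x₁ x)
    (hpt1sum : ∀ t x₁, ∑ x, pt1 t x₁ x = 1)
    (t₀ : ℝ)
    (u : Ω → Ω → A → ℝ)
    (hKFEcond : ∀ x₁ x,
      HasDerivAt (fun t => pt1 t x₁ x) (∑ z, u x z x₁ * pt1 t₀ x₁ z) t₀)
    (Pt : ℝ → Ω → ℝ)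
    (hPt : ∀ t x, Pt t x = ∑ x₁, p₁ x₁ * pt1 t x₁ x)
    (hpos : ∀ z, 0 < Pt t₀ z)
    (p1t : A → Ω → ℝ)
    (hp1t : ∀ x₁ z, p1t x₁ z = p₁ x₁ * pt1 t₀ x₁ z / Pt t₀ z)
    (U : Ω → Ω → ℝ)
    (hU : ∀ x z, U x z = ∑ x₁, u x z x₁ * p1t x₁ z) :
    ∀ x, HasDerivAt (fun t => Pt t x) (∑ z, U x z * Pt t₀ z) t₀ := by
  intro x
  have key : (∑ z, U x z * Pt t₀ z)
      = ∑ x₁, p₁ x₁ * ∑ z, u x z x₁ * pt1 t₀ x₁ z := by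
    simp only [hU, hp1t, Finset.sum_mul, Finset.mul_sum]
    rw [Finset.sum_comm]
    refine Finset.sum_congr rfl fun x₁ _ => Finset.sum_congr rfl fun z _ => ?_
    field_simp [(hpos z).ne']
  have hfun : (fun t => Pt t x) = fun t => ∑ x₁, p₁ x₁ * pt1 t x₁ x :=
    funext fun t => hPt t x
  rw [hfun, key]
  exact HasDerivAt.fun_sum fun x₁ _ => (hKFEcond x₁ x).const_mul _
end

section
/- (Concrete-score form of the rate-based guidance ratio.) Under the common-conditional-path setup, suppose x, z ∈ Ω satisfy p_t(x) > 0, p_t(z) > 0, q_t(x) > 0, q_t(z) > 0, and k(x|x₁) > 0 for every x₁ in the support of p₁. Then (Σ_{x₁} (k(z|x₁)/k(x|x₁)) q_{1|t}(x₁|x)) / (Σ_{x₁} (k(z|x₁)/k(x|x₁)) p_{1|t}(x₁|x)) = (Σ_{x₁} r(x₁) p_{1|t}(x₁|z)) / (Σ_{x₁} r(x₁) p_{1|t}(x₁|x)). -/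
open Finset

/-- Concrete-score form of the rate-based guidance ratio. -/
theorem concrete_score_guidance_ratio
    {S : Type*} [Fintype S] [Nonempty S] {D : ℕ} (hD : 0 < D)
    (p₁ q₁ : (Fin D → S) → ℝ)
    (hp₁nonneg : ∀ x, 0 ≤ p₁ x) (hp₁sum : ∑ x, p₁ x = 1)
    (hq₁nonneg : ∀ x, 0 ≤ q₁ x) (hq₁sum : ∑ x, q₁ x = 1)
    (hac : ∀ x, 0 < q₁ x → 0 < p₁ x)
    (r : (Fin D → S) → ℝ)
    (hr : ∀ x, r x = if 0 < p₁ x then q₁ x / p₁ x else 0)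
    (k : (Fin D → S) → (Fin D → S) → ℝ)
    (hknonneg : ∀ x x₁, 0 ≤ k x x₁) (hksum : ∀ x₁, ∑ x, k x x₁ = 1)
    (pt qt : (Fin D → S) → ℝ)
    (hpt : ∀ x, pt x = ∑ x₁, k x x₁ * p₁ x₁)
    (hqt : ∀ x, qt x = ∑ x₁, k x x₁ * q₁ x₁)
    (p1t q1t : (Fin D → S) → (Fin D → S) → ℝ)
    (hp1t : ∀ x₁ x, 0 < pt x → p1t x₁ x = k x x₁ * p₁ x₁ / pt x)
    (hq1t : ∀ x₁ x, 0 < qt x → q1t x₁ x = k x x₁ * q₁ x₁ / qt x)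
    (x z : Fin D → S)
    (hptx : 0 < pt x) (hptz : 0 < pt z) (hqtx : 0 < qt x) (hqtz : 0 < qt z)
    (hkpos : ∀ x₁, 0 < p₁ x₁ → 0 < k x x₁) :
    (∑ x₁, (k z x₁ / k x x₁) * q1t x₁ x) / (∑ x₁, (k z x₁ / k x x₁) * p1t x₁ x) =
      (∑ x₁, r x₁ * p1t x₁ z) / (∑ x₁, r x₁ * p1t x₁ x) := by

  -- helper facts
  have hp0 : ∀ x₁, ¬ (0 < p₁ x₁) → p₁ x₁ = 0 := fun x₁ h => le_antisymm (not_lt.mp h) (hp₁nonneg x₁)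
  have hq0 : ∀ x₁, p₁ x₁ = 0 → q₁ x₁ = 0 := by
    intro x₁ h
    by_contra hq
    have : 0 < q₁ x₁ := lt_of_le_of_ne (hq₁nonneg x₁) (Ne.symm hq)
    exact absurd (hac x₁ this) (by simp [h])
  have hk0 : ∀ x₁, k x x₁ = 0 → p₁ x₁ = 0 := by
    intro x₁ h
    by_contra hp
    have : 0 < p₁ x₁ := lt_of_le_of_ne (hp₁nonneg x₁) (Ne.symm hp)
    exact absurd (hkpos x₁ this) (by simp [h])
  have hA : ∑ x₁, (k z x₁ / k x x₁) * q1t x₁ x = qt z / qt x := by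
    rw [hqt z, Finset.sum_div]
    refine Finset.sum_congr rfl (fun x₁ _ => ?_)
    rw [hq1t x₁ x hqtx]
    rcases eq_or_lt_of_le (hknonneg x x₁) with hk | hk
    · have hq : q₁ x₁ = 0 := hq0 x₁ (hk0 x₁ hk.symm)
      simp [hq]
    · field_simp
  have hB : ∑ x₁, (k z x₁ / k x x₁) * p1t x₁ x = pt z / pt x := by
    rw [hpt z, Finset.sum_div]
    refine Finset.sum_congr rfl (fun x₁ _ => ?_)
    rw [hp1t x₁ x hptx]
    rcases eq_or_lt_of_le (hknonneg x x₁) with hk | hk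
    · have hp : p₁ x₁ = 0 := hk0 x₁ hk.symm
      simp [hp]
    · field_simp
  have hC : ∀ w, 0 < pt w → ∑ x₁, r x₁ * p1t x₁ w = qt w / pt w := by
    intro w hw
    rw [hqt w, Finset.sum_div]
    refine Finset.sum_congr rfl (fun x₁ _ => ?_)
    rw [hp1t x₁ w hw, hr x₁]
    by_cases hp : 0 < p₁ x₁
    · rw [if_pos hp]
      field_simp
    · have hp' : p₁ x₁ = 0 := hp0 x₁ hp
      simp [if_neg hp, hp', hq0 x₁ hp']
  rw [hA, hB, hC z hptz, hC x hptx]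
  field_simp
end

section
/- (Equivalence proposition for x₁-independent time reversal.) Under the common-conditional-path setup, fix two states x ≠ z with p_t(x) > 0 and k(z|x₁) > 0 for all x₁ in the support of p₁, and let u : Ω → ℝ (x₁ ↦ u(z, x | x₁)) be a conditional rate such that the quantity u(z, x | x₁) · k(x|x₁)/k(z|x₁) takes a common value Q(x, z) for every x₁ in the support of p₁. Then the posterior-averaged rate satisfies Σ_{x₁∈Ω} u(z, x | x₁) p_{1|t}(x₁|x) = Q(x, z) · p_t(z)/p_t(x). -/
open Finset

/-- Equivalence proposition for `x₁`-independent time reversal: if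
`u(z,x|x₁) · k(x|x₁)/k(z|x₁)` takes a common value `Q(x,z)` on the support of `p₁`,
then `Σ_{x₁} u(z,x|x₁) p_{1|t}(x₁|x) = Q(x,z) · p_t(z)/p_t(x)`. -/
theorem x1_independent_time_reversal_equivalence
    {S : Type*} [Fintype S] [Nonempty S] {D : ℕ} (hD : 0 < D)
    (p₁ : (Fin D → S) → ℝ)
    (hp₁nonneg : ∀ x, 0 ≤ p₁ x) (hp₁sum : ∑ x, p₁ x = 1)
    (k : (Fin D → S) → (Fin D → S) → ℝ)
    (hknonneg : ∀ x x₁, 0 ≤ k x x₁) (hksum : ∀ x₁, ∑ x, k x x₁ = 1)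
    (pt : (Fin D → S) → ℝ)
    (hpt : ∀ x, pt x = ∑ x₁, k x x₁ * p₁ x₁)
    (x z : Fin D → S) (hxz : x ≠ z)
    (hptpos : 0 < pt x)
    (hkz : ∀ x₁, 0 < p₁ x₁ → 0 < k z x₁)
    (u : (Fin D → S) → ℝ) (Qxz : ℝ)
    (hcommon : ∀ x₁, 0 < p₁ x₁ → u x₁ * k x x₁ / k z x₁ = Qxz) :
    ∑ x₁, u x₁ * (k x x₁ * p₁ x₁ / pt x) = Qxz * pt z / pt x := by
  have key : ∀ x₁, u x₁ * (k x x₁ * p₁ x₁) = Qxz * (k z x₁ * p₁ x₁) := by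
    intro x₁
    rcases eq_or_lt_of_le (hp₁nonneg x₁) with h | h
    · rw [← h]; ring
    · have hkzpos := hkz x₁ h
      have := hcommon x₁ h
      field_simp at this
      nlinarith [this]
  calc ∑ x₁, u x₁ * (k x x₁ * p₁ x₁ / pt x)
      = (∑ x₁, u x₁ * (k x x₁ * p₁ x₁)) / pt x := by
        rw [Finset.sum_div]; congr 1; ext x₁; ring
    _ = (∑ x₁, Qxz * (k z x₁ * p₁ x₁)) / pt x := by
        congr 1; exact Finset.sum_congr rfl fun x₁ _ => key x₁
    _ = Qxz * pt z / pt x := by rw [← Finset.mul_sum, hpt z]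
end

section
/- (The exact guidance minimizes the regularization objective.) Under the common-conditional-path setup with coordinate-marginal posteriors, define for x with p_t(x) > 0 the exact guidance h*(d, s, x) = (Σ_{x₁ : x₁(d) = s} r(x₁) p_{1|t}(x₁|x)) / p^d_{1|t}(s|x) whenever p^d_{1|t}(s|x) > 0 (and h*(d, s, x) = 1 otherwise). Then for every H : Fin D × S × Ω → ℝ with H(d, s, x) > 0 everywhere, the objective L(H) = Σ_{x₁∈Ω} Σ_{x∈Ω} q₁(x₁) k(x|x₁) · Σ_{d∈Fin D} (− log( H(d, x₁(d), x) p^d_{1|t}(x₁(d)|x) / Σ_{s∈S} H(d, s, x) p^d_{1|t}(s|x) )) satisfies L(H) ≥ L(h*); that is, the exact guidance attains the minimum of the cross-entropy regularization objective over positive guidance functions. -/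
open Finset

lemma gibbs_ineq {ι : Type*} [Fintype ι] (a b : ι → ℝ)
    (ha : ∀ s, 0 ≤ a s) (hb : ∀ s, 0 ≤ b s)
    (hab : ∀ s, 0 < a s → 0 < b s) :
    ∑ s, a s * Real.log (b s / ∑ t, b t) ≤ ∑ s, a s * Real.log (a s / ∑ t, a t) := by
  set A := ∑ t, a t with hA
  set B := ∑ t, b t with hB
  have hA0 : (0:ℝ) ≤ A := Finset.sum_nonneg fun s _ => ha s
  rcases eq_or_lt_of_le hA0 with h0 | hApos
  · have hz : ∀ s, a s = 0 := fun s =>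
      (Finset.sum_eq_zero_iff_of_nonneg (fun t _ => ha t)).mp h0.symm s (mem_univ s)
    simp [hz]
  · obtain ⟨s₀, hs₀⟩ : ∃ s, 0 < a s := by
      by_contra h
      push_neg at h
      have : A ≤ 0 := Finset.sum_nonpos fun s _ => h s
      linarith
    have hBpos : 0 < B := by
      have hb0 : 0 < b s₀ := hab s₀ hs₀
      have : b s₀ ≤ B := Finset.single_le_sum (fun t _ => hb t) (mem_univ s₀)
      linarith
    have key : ∀ s, a s * Real.log (b s / B) ≤
        a s * Real.log (a s / A) + (A / B * b s - a s) := by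
      intro s
      rcases eq_or_lt_of_le (ha s) with h0 | hpos
      · rw [← h0]
        simp only [zero_mul, zero_add, sub_zero]
        exact mul_nonneg (div_nonneg hA0 hBpos.le) (hb s)
      · have hbpos := hab s hpos
        have harg : (0:ℝ) < b s / B * (A / a s) := by positivity
        have hlog := Real.log_le_sub_one_of_pos harg
        have hsplit : Real.log (b s / B * (A / a s)) =
            Real.log (b s / B) - Real.log (a s / A) := by
          rw [Real.log_mul (by positivity) (by positivity),
            Real.log_div (ne_of_gt hApos) (ne_of_gt hpos),
            Real.log_div (ne_of_gt hpos) (ne_of_gt hApos)]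
          ring
        have h2 : a s * Real.log (b s / B * (A / a s)) ≤
            a s * (b s / B * (A / a s) - 1) :=
          mul_le_mul_of_nonneg_left hlog hpos.le
        have h3 : a s * (b s / B * (A / a s) - 1) = A / B * b s - a s := by
          field_simp
        rw [hsplit] at h2
        rw [h3] at h2
        linarith
    have hsum := Finset.sum_le_sum fun s (_ : s ∈ univ) => key s
    have h4 : ∑ s, (a s * Real.log (a s / A) + (A / B * b s - a s)) =
        (∑ s, a s * Real.log (a s / A)) + (A / B * B - A) := by
      rw [Finset.sum_add_distrib, Finset.sum_sub_distrib, ← Finset.mul_sum, ← hA, ← hB]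
    have h5 : A / B * B - A = 0 := by field_simp; ring
    rw [h4, h5, add_zero] at hsum
    exact hsum

/-- The exact guidance minimizes the cross-entropy regularization objective over
positive guidance functions. -/
theorem exact_guidance_minimizes_regularization
    {S : Type*} [Fintype S] [Nonempty S] [DecidableEq S] {D : ℕ} (hD : 0 < D)
    (p₁ q₁ : (Fin D → S) → ℝ)
    (hp₁nonneg : ∀ x, 0 ≤ p₁ x) (hp₁sum : ∑ x, p₁ x = 1)
    (hq₁nonneg : ∀ x, 0 ≤ q₁ x) (hq₁sum : ∑ x, q₁ x = 1)
    (hac : ∀ x, 0 < q₁ x → 0 < p₁ x)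
    (r : (Fin D → S) → ℝ)
    (hr : ∀ x, r x = if 0 < p₁ x then q₁ x / p₁ x else 0)
    (k : (Fin D → S) → (Fin D → S) → ℝ)
    (hknonneg : ∀ x x₁, 0 ≤ k x x₁) (hksum : ∀ x₁, ∑ x, k x x₁ = 1)
    (pt : (Fin D → S) → ℝ)
    (hpt : ∀ x, pt x = ∑ x₁, k x x₁ * p₁ x₁)
    (p1t : (Fin D → S) → (Fin D → S) → ℝ)
    (hp1t : ∀ x₁ x, 0 < pt x → p1t x₁ x = k x x₁ * p₁ x₁ / pt x)
    (pd : Fin D → S → (Fin D → S) → ℝ)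
    (hpd : ∀ d s x, 0 < pt x →
      pd d s x = ∑ x₁ ∈ Finset.univ.filter (fun x₁ => x₁ d = s), p1t x₁ x)
    (hstar : Fin D → S → (Fin D → S) → ℝ)
    (hhstar : ∀ d s x, 0 < pt x → 0 < pd d s x →
      hstar d s x =
        (∑ x₁ ∈ Finset.univ.filter (fun x₁ => x₁ d = s), r x₁ * p1t x₁ x) / pd d s x)
    (hhstar' : ∀ d s x, ¬ (0 < pt x ∧ 0 < pd d s x) → hstar d s x = 1)
    (H : Fin D → S → (Fin D → S) → ℝ)
    (hHpos : ∀ d s x, 0 < H d s x) :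
    (∑ x₁, ∑ x, q₁ x₁ * k x x₁ *
        ∑ d, -Real.log (H d (x₁ d) x * pd d (x₁ d) x / ∑ s, H d s x * pd d s x)) ≥
      ∑ x₁, ∑ x, q₁ x₁ * k x x₁ *
        ∑ d, -Real.log
          (hstar d (x₁ d) x * pd d (x₁ d) x / ∑ s, hstar d s x * pd d s x) := by
  rw [ge_iff_le]
  have rearr : ∀ g : Fin D → S → (Fin D → S) → ℝ,
      (∑ x₁, ∑ x, q₁ x₁ * k x x₁ *
        ∑ d, -Real.log (g d (x₁ d) x * pd d (x₁ d) x / ∑ s, g d s x * pd d s x))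
      = ∑ x, ∑ d, ∑ x₁, q₁ x₁ * k x x₁ *
          -Real.log (g d (x₁ d) x * pd d (x₁ d) x / ∑ s, g d s x * pd d s x) := by
    intro g
    rw [Finset.sum_comm]
    refine Finset.sum_congr rfl fun x _ => ?_
    simp_rw [Finset.mul_sum]
    rw [Finset.sum_comm]
  rw [rearr, rearr]
  refine Finset.sum_le_sum fun x _ => ?_
  refine Finset.sum_le_sum fun d _ => ?_
  by_cases hptx : 0 < pt x
  · -- main case
    have hp1t_nonneg : ∀ x₁, 0 ≤ p1t x₁ x := by
      intro x₁
      rw [hp1t x₁ x hptx]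
      exact div_nonneg (mul_nonneg (hknonneg x x₁) (hp₁nonneg x₁)) hptx.le
    have hr_nonneg : ∀ x₁, 0 ≤ r x₁ := by
      intro x₁
      rw [hr x₁]
      split
      · exact div_nonneg (hq₁nonneg x₁) (by linarith [‹0 < p₁ x₁›])
      · exact le_refl 0
    have hpd_eq : ∀ s, pd d s x =
        ∑ x₁ ∈ Finset.univ.filter (fun x₁ => x₁ d = s), p1t x₁ x :=
      fun s => hpd d s x hptx
    have hpd_nonneg : ∀ s, 0 ≤ pd d s x := by
      intro s
      rw [hpd_eq s]
      exact Finset.sum_nonneg fun x₁ _ => hp1t_nonneg x₁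
    set a : S → ℝ :=
      fun s => ∑ x₁ ∈ Finset.univ.filter (fun x₁ => x₁ d = s), r x₁ * p1t x₁ x
      with ha_def
    have ha_nonneg : ∀ s, 0 ≤ a s := fun s =>
      Finset.sum_nonneg fun x₁ _ => mul_nonneg (hr_nonneg x₁) (hp1t_nonneg x₁)
    have hzero : ∀ s, pd d s x = 0 → a s = 0 := by
      intro s h0
      have hz : ∀ x₁ ∈ Finset.univ.filter (fun x₁ => x₁ d = s), p1t x₁ x = 0 := by
        intro x₁ hx₁
        refine (Finset.sum_eq_zero_iff_of_nonneg (fun t _ => hp1t_nonneg t)).mp ?_ x₁ hx₁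
        rw [← hpd_eq s]
        exact h0
      exact Finset.sum_eq_zero fun x₁ hx₁ => by rw [hz x₁ hx₁, mul_zero]
    have key2 : ∀ s, hstar d s x * pd d s x = a s := by
      intro s
      rcases eq_or_lt_of_le (hpd_nonneg s) with h0 | hpos
      · rw [← h0, mul_zero, hzero s h0.symm]
      · rw [hhstar d s x hptx hpos, div_mul_cancel₀ _ (ne_of_gt hpos)]
    have hw : ∀ x₁, q₁ x₁ * k x x₁ = pt x * (r x₁ * p1t x₁ x) := by
      intro x₁
      rw [hp1t x₁ x hptx, hr x₁]
      rcases eq_or_lt_of_le (hp₁nonneg x₁) with h0 | hpos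
      · have hq0 : q₁ x₁ = 0 := by
          by_contra hq
          have hlt := hac x₁ (lt_of_le_of_ne (hq₁nonneg x₁) (Ne.symm hq))
          rw [← h0] at hlt
          exact lt_irrefl 0 hlt
        rw [hq0, ← h0]
        simp
      · rw [if_pos hpos]
        field_simp
    have regroup : ∀ f : S → ℝ,
        ∑ x₁, q₁ x₁ * k x x₁ * f (x₁ d) = pt x * ∑ s, a s * f s := by
      intro f
      calc ∑ x₁, q₁ x₁ * k x x₁ * f (x₁ d)
          = ∑ x₁, pt x * (r x₁ * p1t x₁ x * f (x₁ d)) := by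
            refine Finset.sum_congr rfl fun x₁ _ => ?_
            rw [hw x₁]
            ring
        _ = pt x * ∑ x₁, r x₁ * p1t x₁ x * f (x₁ d) := by rw [← Finset.mul_sum]
        _ = pt x * ∑ s, ∑ x₁ ∈ Finset.univ.filter (fun x₁ => x₁ d = s),
              r x₁ * p1t x₁ x * f (x₁ d) := by
            congr 1
            exact (Finset.sum_fiberwise _ _ _).symm
        _ = pt x * ∑ s, a s * f s := by
            congr 1
            refine Finset.sum_congr rfl fun s _ => ?_
            rw [ha_def, Finset.sum_mul]
            refine Finset.sum_congr rfl fun x₁ hx₁ => ?_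
            rw [(Finset.mem_filter.mp hx₁).2]
    have e1 := regroup (fun s =>
      -Real.log (hstar d s x * pd d s x / ∑ t, hstar d t x * pd d t x))
    have e2 := regroup (fun s =>
      -Real.log (H d s x * pd d s x / ∑ t, H d t x * pd d t x))
    beta_reduce at e1 e2
    rw [e1, e2]
    refine mul_le_mul_of_nonneg_left ?_ hptx.le
    simp only [key2, mul_neg]
    rw [Finset.sum_neg_distrib, Finset.sum_neg_distrib, neg_le_neg_iff]
    refine gibbs_ineq a (fun s => H d s x * pd d s x) ha_nonneg
      (fun s => mul_nonneg (hHpos d s x).le (hpd_nonneg s)) ?_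
    intro s hs
    have hpdpos : 0 < pd d s x := by
      rcases eq_or_lt_of_le (hpd_nonneg s) with h0 | hpos
      · rw [hzero s h0.symm] at hs
        exact absurd hs (lt_irrefl 0)
      · exact hpos
    exact mul_pos (hHpos d s x) hpdpos
  · -- degenerate case : pt x = 0 so all weights vanish
    have hpt0 : pt x = 0 := by
      have h0 : 0 ≤ pt x := by
        rw [hpt x]
        exact Finset.sum_nonneg fun x₁ _ => mul_nonneg (hknonneg x x₁) (hp₁nonneg x₁)
      exact le_antisymm (not_lt.mp hptx) h0
    have hw : ∀ x₁, q₁ x₁ * k x x₁ = 0 := by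
      intro x₁
      rcases eq_or_lt_of_le (hq₁nonneg x₁) with h | h
      · rw [← h, zero_mul]
      · have hp := hac x₁ h
        have hsum0 : ∑ x₁', k x x₁' * p₁ x₁' = 0 := by rw [← hpt x]; exact hpt0
        have hk0 : k x x₁ * p₁ x₁ = 0 :=
          (Finset.sum_eq_zero_iff_of_nonneg
            (fun x₁' _ => mul_nonneg (hknonneg x x₁') (hp₁nonneg x₁'))).mp hsum0 x₁ (mem_univ x₁)
        have : k x x₁ = 0 := by
          rcases mul_eq_zero.mp hk0 with h' | h'
          · exact h'
          · exact absurd h' (ne_of_gt hp)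
        rw [this, mul_zero]
    simp [hw]
end

section
/- (Guidance for discrete flow matching, coordinate marginal rates.) Under the common-conditional-path setup with coordinate-marginal posteriors, fix x ∈ Ω with p_t(x) > 0 and q_t(x) > 0, let m(x) = Σ_{x₁∈Ω} r(x₁) p_{1|t}(x₁|x) (> 0), and for d ∈ Fin D, s ∈ S with p^d_{1|t}(s|x) > 0 set h(d, s, x) = (Σ_{x₁ : x₁(d) = s} r(x₁) p_{1|t}(x₁|x)) / p^d_{1|t}(s|x). Let u^d : S × S × S → ℝ be coordinate conditional rates and define the marginal rates u^{p,d}(z_d, x) = Σ_{s∈S} u^d(z_d, x(d) | s) p^d_{1|t}(s|x) and u^{q,d}(z_d, x) = Σ_{s∈S} u^d(z_d, x(d) | s) q^d_{1|t}(s|x). Then for every d and z_d ∈ S: u^{q,d}(z_d, x) = u^{p,d}(z_d, x) + Σ_{s∈S} (h(d, s, x)/m(x) − 1) · u^d(z_d, x(d) | s) · p^d_{1|t}(s|x), where summands with p^d_{1|t}(s|x) = 0 are 0. -/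
open Finset

/-- Guidance for discrete flow matching, coordinate marginal rates:
`u^{q,d}(z_d,x) = u^{p,d}(z_d,x) + Σ_s (h(d,s,x)/m(x) − 1) u^d(z_d, x d | s) p^d_{1|t}(s|x)`. -/
theorem discrete_flow_matching_guidance_rates
    {S : Type*} [Fintype S] [Nonempty S] [DecidableEq S] {D : ℕ} (hD : 0 < D)
    (p₁ q₁ : (Fin D → S) → ℝ)
    (hp₁nonneg : ∀ x, 0 ≤ p₁ x) (hp₁sum : ∑ x, p₁ x = 1)
    (hq₁nonneg : ∀ x, 0 ≤ q₁ x) (hq₁sum : ∑ x, q₁ x = 1)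
    (hac : ∀ x, 0 < q₁ x → 0 < p₁ x)
    (r : (Fin D → S) → ℝ)
    (hr : ∀ x, r x = if 0 < p₁ x then q₁ x / p₁ x else 0)
    (k : (Fin D → S) → (Fin D → S) → ℝ)
    (hknonneg : ∀ x x₁, 0 ≤ k x x₁) (hksum : ∀ x₁, ∑ x, k x x₁ = 1)
    (pt qt : (Fin D → S) → ℝ)
    (hpt : ∀ x, pt x = ∑ x₁, k x x₁ * p₁ x₁)
    (hqt : ∀ x, qt x = ∑ x₁, k x x₁ * q₁ x₁)
    (p1t q1t : (Fin D → S) → (Fin D → S) → ℝ)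
    (hp1t : ∀ x₁ x, 0 < pt x → p1t x₁ x = k x x₁ * p₁ x₁ / pt x)
    (hq1t : ∀ x₁ x, 0 < qt x → q1t x₁ x = k x x₁ * q₁ x₁ / qt x)
    (pd qd : Fin D → S → (Fin D → S) → ℝ)
    (hpd : ∀ d s x, pd d s x = ∑ x₁ ∈ Finset.univ.filter (fun x₁ => x₁ d = s), p1t x₁ x)
    (hqd : ∀ d s x, qd d s x = ∑ x₁ ∈ Finset.univ.filter (fun x₁ => x₁ d = s), q1t x₁ x)
    (x : Fin D → S) (hptpos : 0 < pt x) (hqtpos : 0 < qt x)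
    (m : ℝ) (hmdef : m = ∑ x₁, r x₁ * p1t x₁ x) (hmpos : 0 < m)
    (h : Fin D → S → (Fin D → S) → ℝ)
    (hh : ∀ d s, 0 < pd d s x →
      h d s x = (∑ x₁ ∈ Finset.univ.filter (fun x₁ => x₁ d = s), r x₁ * p1t x₁ x) /
        pd d s x)
    (ud : Fin D → S → S → S → ℝ) :
    ∀ (d : Fin D) (zd : S),
      ∑ s, ud d zd (x d) s * qd d s x =
        (∑ s, ud d zd (x d) s * pd d s x) +
          ∑ s, (h d s x / m - 1) * ud d zd (x d) s * pd d s x := by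
  -- r x₁ * p₁ x₁ = q₁ x₁ always
  have hrp : ∀ x₁, r x₁ * p₁ x₁ = q₁ x₁ := by
    intro x₁
    rw [hr]
    by_cases hp : 0 < p₁ x₁
    · rw [if_pos hp]; field_simp
    · rw [if_neg hp, zero_mul]
      by_contra hq
      exact hp (hac x₁ ((hq₁nonneg x₁).lt_of_ne hq))
  have hp1tnn : ∀ x₁, 0 ≤ p1t x₁ x := by
    intro x₁
    rw [hp1t x₁ x hptpos]
    exact div_nonneg (mul_nonneg (hknonneg x x₁) (hp₁nonneg x₁)) hptpos.le
  -- m * pt x = qt x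
  have hm : m * pt x = qt x := by
    rw [hmdef, hqt, Finset.sum_mul]
    apply Finset.sum_congr rfl
    intro x₁ _
    rw [hp1t x₁ x hptpos]
    field_simp
    rw [← hrp x₁]; ring
  intro d zd
  rw [← Finset.sum_add_distrib]
  apply Finset.sum_congr rfl
  intro s _
  have hpdnn : 0 ≤ pd d s x := by
    rw [hpd]
    exact Finset.sum_nonneg fun x₁ _ => hp1tnn x₁
  rcases hpdnn.lt_or_eq with hpdpos | hpd0
  · -- pd > 0 : show qd = h/m * pd
    have hsum : (∑ x₁ ∈ Finset.univ.filter (fun x₁ => x₁ d = s), r x₁ * p1t x₁ x)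
        = qd d s x * (qt x / pt x) := by
      rw [hqd, Finset.sum_mul]
      apply Finset.sum_congr rfl
      intro x₁ _
      rw [hp1t x₁ x hptpos, hq1t x₁ x hqtpos]
      field_simp
      rw [← hrp x₁]; ring
    have hmeq : m = qt x / pt x := by
      field_simp
      linarith [hm]
    have hqd' : qd d s x = h d s x / m * pd d s x := by
      rw [hh d s hpdpos, hsum, hmeq]
      have h1 : qt x / pt x ≠ 0 := by rw [← hmeq]; exact hmpos.ne'
      field_simp
    rw [hqd']
    ring
  · -- pd = 0 : show qd = 0
    have hqd0 : qd d s x = 0 := by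
      rw [hqd]
      apply Finset.sum_eq_zero
      intro x₁ hx₁
      rw [hq1t x₁ x hqtpos]
      rcases (hq₁nonneg x₁).lt_or_eq with hq | hq
      · have hp : 0 < p₁ x₁ := hac x₁ hq
        have hterm : p1t x₁ x = 0 :=
          (Finset.sum_eq_zero_iff_of_nonneg (fun y _ => hp1tnn y)).mp
            (by rw [← hpd]; exact hpd0.symm) x₁ hx₁
        rw [hp1t x₁ x hptpos] at hterm
        have hkp : k x x₁ * p₁ x₁ = 0 := by
          rcases div_eq_zero_iff.mp hterm with h' | h'
          · exact h'
          · exact absurd h' hptpos.ne'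
        have hk : k x x₁ = 0 := by
          rcases mul_eq_zero.mp hkp with h' | h'
          · exact h'
          · exact absurd h' hp.ne'
        rw [hk]; ring
      · rw [← hq]; ring
    rw [← hpd0, hqd0]
    ring
end

section
/- (Discrete-time guidance.) Let Ω be a nonempty finite set, p₁, q₁ pmfs on Ω with q₁ absolutely continuous with respect to p₁, r the density ratio (r = q₁/p₁ on the support of p₁, 0 elsewhere), and let k, k' be two Markov kernels from Ω to pmfs on Ω (the shared conditional probability paths at times t and t + h). Define p_t, q_t from k and p_{t+h}, q_{t+h} from k' by mixing against p₁ and q₁ respectively, with posteriors p_{1|t}(x₁|x) = k(x|x₁)p₁(x₁)/p_t(x) and p_{1|t+h}(x₁|z) = k'(z|x₁)p₁(x₁)/p_{t+h}(z). Let P, Q be forward transition kernels with p_{t+h}(z) = Σ_x P(z|x) p_t(x), q_{t+h}(z) = Σ_x Q(z|x) q_t(x), and equal backward conditionals: P(z|x) p_t(x)/p_{t+h}(z) = Q(z|x) q_t(x)/q_{t+h}(z) whenever the denominators are positive. Then for all x, z with p_t(x), q_t(x), p_{t+h}(z), q_{t+h}(z) all positive: Q(z|x) = ((Σ_{x₁}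 r(x₁) p_{1|t+h}(x₁|z)) / (Σ_{x₁} r(x₁) p_{1|t}(x₁|x))) · P(z|x). -/
open Finset

/-- Discrete-time guidance: under equal backward conditionals,
`Q(z|x) = ((Σ_{x₁} r x₁ p_{1|t+h}(x₁|z)) / (Σ_{x₁} r x₁ p_{1|t}(x₁|x))) · P(z|x)`. -/
theorem discrete_time_guidance
    {Ω : Type*} [Fintype Ω] [Nonempty Ω]
    (p₁ q₁ : Ω → ℝ)
    (hp₁nonneg : ∀ x, 0 ≤ p₁ x) (hp₁sum : ∑ x, p₁ x = 1)
    (hq₁nonneg : ∀ x, 0 ≤ q₁ x) (hq₁sum : ∑ x, q₁ x = 1)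
    (hac : ∀ x, 0 < q₁ x → 0 < p₁ x)
    (r : Ω → ℝ)
    (hr : ∀ x, r x = if 0 < p₁ x then q₁ x / p₁ x else 0)
    (k k' : Ω → Ω → ℝ)
    (hknonneg : ∀ x x₁, 0 ≤ k x x₁) (hksum : ∀ x₁, ∑ x, k x x₁ = 1)
    (hk'nonneg : ∀ x x₁, 0 ≤ k' x x₁) (hk'sum : ∀ x₁, ∑ x, k' x x₁ = 1)
    (pt qt pth qth : Ω → ℝ)
    (hpt : ∀ x, pt x = ∑ x₁, k x x₁ * p₁ x₁)
    (hqt : ∀ x, qt x = ∑ x₁, k x x₁ * q₁ x₁)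
    (hpth : ∀ z, pth z = ∑ x₁, k' z x₁ * p₁ x₁)
    (hqth : ∀ z, qth z = ∑ x₁, k' z x₁ * q₁ x₁)
    (P Q : Ω → Ω → ℝ)
    (hPnonneg : ∀ z x, 0 ≤ P z x) (hPsum : ∀ x, ∑ z, P z x = 1)
    (hQnonneg : ∀ z x, 0 ≤ Q z x) (hQsum : ∀ x, ∑ z, Q z x = 1)
    (hPmarg : ∀ z, pth z = ∑ x, P z x * pt x)
    (hQmarg : ∀ z, qth z = ∑ x, Q z x * qt x)
    (hback : ∀ x z, 0 < pth z → 0 < qth z →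
      P z x * pt x / pth z = Q z x * qt x / qth z) :
    ∀ x z, 0 < pt x → 0 < qt x → 0 < pth z → 0 < qth z →
      Q z x = ((∑ x₁, r x₁ * (k' z x₁ * p₁ x₁ / pth z)) /
          (∑ x₁, r x₁ * (k x x₁ * p₁ x₁ / pt x))) * P z x := by
  intro x z hptx hqtx hpthz hqthz
  have hrp : ∀ y, r y * p₁ y = q₁ y := by
    intro y
    rw [hr y]
    by_cases h : 0 < p₁ y
    · simp [h]; field_simp
    · have hp0 : p₁ y = 0 := le_antisymm (not_lt.mp h) (hp₁nonneg y)
      have hq0 : q₁ y = 0 := by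
        by_contra hq
        exact h (hac y (lt_of_le_of_ne (hq₁nonneg y) (Ne.symm hq)))
      simp [hp0, hq0]
  have hsum1 : (∑ x₁, r x₁ * (k' z x₁ * p₁ x₁ / pth z)) = qth z / pth z := by
    rw [hqth, Finset.sum_div]
    apply Finset.sum_congr rfl
    intro y _
    rw [← hrp y]
    ring
  have hsum2 : (∑ x₁, r x₁ * (k x x₁ * p₁ x₁ / pt x)) = qt x / pt x := by
    rw [hqt, Finset.sum_div]
    apply Finset.sum_congr rfl
    intro y _
    rw [← hrp y]
    ring
  rw [hsum1, hsum2]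
  have hb := hback x z hpthz hqthz
  field_simp at hb ⊢
  linarith [hb]
end

section
/- (Predictor guidance with unit strength satisfies the Kolmogorov forward equation for the conditional path.) Let Ω be a nonempty finite set and I an open interval of times. Let t ↦ p_t and t ↦ π_t be differentiable families of strictly positive pmfs on Ω (π_t playing the role of p_t(·|y)), let c > 0 (playing the role of p(y)), and define g_t(z) = c · π_t(z)/p_t(z). Suppose Q_t : Ω × Ω → ℝ satisfies, for every z ∈ Ω and t ∈ I: (i) d/dt p_t(z) = −Σ_{x∈Ω} Q_t(z, x) p_t(x); (ii) d/dt π_t(z) = −Σ_{x∈Ω} Q_t(z, x) π_t(x); (iii) Σ_{x∈Ω} Q_t(x, z) = 0. Define the time-reversed rate u_t(z, x) = Q_t(x, z) p_t(z)/p_t(x) for z ≠ x, and the unit-strength predictor-guided rate w_t(z, x) = (g_t(z)/g_t(x)) u_t(z, x) for z ≠ x. Then for every z ∈ Ω and t ∈ I: Σ_{x ≠ z} w_t(z, x) π_t(x) − Σ_{x ≠ z} w_t(x, z) π_t(z) = d/dt π_t(z); i.e. w_t generates the probability path π_t. -/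
open Finset

/-- Predictor guidance with unit strength satisfies the Kolmogorov forward equation for
the conditional path: the unit-strength predictor-guided rate `w_t` generates `π_t`. -/
theorem unit_strength_predictor_guidance_generates
    {Ω : Type*} [Fintype Ω] [Nonempty Ω] [DecidableEq Ω]
    (a b : ℝ)
    (pt prt : ℝ → Ω → ℝ)
    (hptpos : ∀ t ∈ Set.Ioo a b, ∀ z, 0 < pt t z)
    (hptsum : ∀ t ∈ Set.Ioo a b, ∑ z, pt t z = 1)
    (hprtpos : ∀ t ∈ Set.Ioo a b, ∀ z, 0 < prt t z)
    (hprtsum : ∀ t ∈ Set.Ioo a b, ∑ z, prt t z = 1)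
    (c : ℝ) (hc : 0 < c)
    (g : ℝ → Ω → ℝ) (hg : ∀ t z, g t z = c * prt t z / pt t z)
    (Q : ℝ → Ω → Ω → ℝ)
    (hKFEp : ∀ t ∈ Set.Ioo a b, ∀ z,
      HasDerivAt (fun s => pt s z) (-∑ x, Q t z x * pt t x) t)
    (hKFEpr : ∀ t ∈ Set.Ioo a b, ∀ z,
      HasDerivAt (fun s => prt s z) (-∑ x, Q t z x * prt t x) t)
    (hcons : ∀ t ∈ Set.Ioo a b, ∀ z, ∑ x, Q t x z = 0)
    (u : ℝ → Ω → Ω → ℝ)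
    (hu : ∀ t z x, z ≠ x → u t z x = Q t x z * pt t z / pt t x)
    (w : ℝ → Ω → Ω → ℝ)
    (hw : ∀ t z x, z ≠ x → w t z x = g t z / g t x * u t z x) :
    ∀ t ∈ Set.Ioo a b, ∀ z,
      HasDerivAt (fun s => prt s z)
        ((∑ x ∈ Finset.univ.filter (fun x => x ≠ z), w t z x * prt t x) -
          ∑ x ∈ Finset.univ.filter (fun x => x ≠ z), w t x z * prt t z) t := by
  intro t ht z
  have hpos := hptpos t ht
  have hprpos := hprtpos t ht
  have key : (∑ x ∈ Finset.univ.filter (fun x => x ≠ z), w t z x * prt t x) -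
      ∑ x ∈ Finset.univ.filter (fun x => x ≠ z), w t x z * prt t z
      = -∑ x, Q t z x * prt t x := by
    have h1 : ∀ x ∈ Finset.univ.filter (fun x => x ≠ z),
        w t z x * prt t x = prt t z * Q t x z := by
      intro x hx
      simp only [mem_filter] at hx
      have hxz : z ≠ x := fun h => hx.2 h.symm
      rw [hw t z x hxz, hu t z x hxz, hg, hg]
      field_simp [(hpos z).ne', (hpos x).ne', (hprpos x).ne', hc.ne']
    have h2 : ∀ x ∈ Finset.univ.filter (fun x => x ≠ z),
        w t x z * prt t z = Q t z x * prt t x := by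
      intro x hx
      simp only [mem_filter] at hx
      rw [hw t x z hx.2, hu t x z hx.2, hg, hg]
      field_simp [(hpos z).ne', (hpos x).ne', (hprpos z).ne', hc.ne']
    rw [Finset.sum_congr rfl h1, Finset.sum_congr rfl h2]
    have hfe : Finset.univ.filter (fun x => x ≠ z) = Finset.univ.erase z :=
      Finset.filter_ne' _ _
    rw [hfe, Finset.sum_erase_eq_sub (Finset.mem_univ z),
      Finset.sum_erase_eq_sub (Finset.mem_univ z), ← Finset.mul_sum,
      hcons t ht z]
    ring
  rw [key]
  exact hKFEpr t ht z
end
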